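/- Let n ≥ 1 and k ≥ 0 be integers. The map α defined by α((x,y),(x',y')) = (x + x' + 3xx' + 3xy' + 3yx', y + y' − 3xx' + 3yy') is a bijection from C_n × C_{n+3^k} onto C_{3n²+(3^{k+1}+2)n+3^k}. -/

import Mathlib

/-- `C n` is the set of characteristic vectors of 3-core partitions of `n`. -/
def C (n : ℤ) : Set (ℤ × ℤ) :=
  {p | 3 * p.1 ^ 2 + 3 * p.1 * p.2 + 3 * p.2 ^ 2 + p.1 + 2 * p.2 = n}

/-- The map `α((x,y),(x',y')) = (x + x' + 3xx' + 3xy' + 3yx', y + y' - 3xx' + 3yy')`. -/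
def alphaMap : (ℤ × ℤ) × (ℤ × ℤ) → ℤ × ℤ := fun q =>
  (q.1.1 + q.2.1 + 3 * q.1.1 * q.2.1 + 3 * q.1.1 * q.2.2 + 3 * q.1.2 * q.2.1,
   q.1.2 + q.2.2 - 3 * q.1.1 * q.2.1 + 3 * q.1.2 * q.2.2)

@[ext]
structure Eis where
  re : ℤ
  im : ℤ
deriving DecidableEq

namespace Eis

instance : Zero Eis := ⟨⟨0, 0⟩⟩
instance : One Eis := ⟨⟨1, 0⟩⟩
instance : Add Eis := ⟨fun a b => ⟨a.re + b.re, a.im + b.im⟩⟩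
instance : Neg Eis := ⟨fun a => ⟨-a.re, -a.im⟩⟩
instance : Mul Eis := ⟨fun a b => ⟨a.re * b.re - a.im * b.im,
  a.re * b.im + a.im * b.re - a.im * b.im⟩⟩

@[simp] theorem mk_re (a b : ℤ) : (Eis.mk a b).re = a := rfl
@[simp] theorem mk_im (a b : ℤ) : (Eis.mk a b).im = b := rfl
@[simp] theorem zero_re : (0 : Eis).re = 0 := rfl
@[simp] theorem zero_im : (0 : Eis).im = 0 := rfl
@[simp] theorem one_re : (1 : Eis).re = 1 := rfl
@[simp] theorem one_im : (1 : Eis).im = 0 := rfl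
@[simp] theorem add_re (a b : Eis) : (a + b).re = a.re + b.re := rfl
@[simp] theorem add_im (a b : Eis) : (a + b).im = a.im + b.im := rfl
@[simp] theorem neg_re (a : Eis) : (-a).re = -a.re := rfl
@[simp] theorem neg_im (a : Eis) : (-a).im = -a.im := rfl
@[simp] theorem mul_re (a b : Eis) : (a * b).re = a.re * b.re - a.im * b.im := rfl
@[simp] theorem mul_im (a b : Eis) :
    (a * b).im = a.re * b.im + a.im * b.re - a.im * b.im := rfl

instance commRing : CommRing Eis where
  add_assoc := by intros; ext <;> simp <;> ring
  zero_add := by intros; ext <;> simp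
  add_zero := by intros; ext <;> simp
  add_comm := by intros; ext <;> simp <;> ring
  neg_add_cancel := by intros; ext <;> simp
  mul_assoc := by intros; ext <;> simp <;> ring
  one_mul := by intros; ext <;> simp
  mul_one := by intros; ext <;> simp
  left_distrib := by intros; ext <;> simp <;> ring
  right_distrib := by intros; ext <;> simp <;> ring
  zero_mul := by intros; ext <;> simp
  mul_zero := by intros; ext <;> simp
  mul_comm := by intros; ext <;> simp <;> ring
  natCast n := ⟨n, 0⟩
  natCast_zero := by ext <;> simp
  natCast_succ := by intros; ext <;> simp
  intCast n := ⟨n, 0⟩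
  intCast_ofNat := by intros; ext <;> rfl
  intCast_negSucc := fun n => by
    ext
    · show Int.negSucc n = -((n + 1 : ℕ) : ℤ); simp [Int.negSucc_eq]
    · show (0 : ℤ) = -(0 : ℤ); simp
  nsmul n a := ⟨n * a.re, n * a.im⟩
  nsmul_zero := fun x => by ext <;> (show ((0 : ℕ) : ℤ) * _ = 0; simp)
  nsmul_succ := fun n x => by
    ext <;> (show ((n + 1 : ℕ) : ℤ) * _ = (n : ℤ) * _ + _; push_cast; ring)
  zsmul n a := ⟨n * a.re, n * a.im⟩
  zsmul_zero' := fun a => by ext <;> (show (0 : ℤ) * _ = 0; simp)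
  zsmul_succ' := fun n a => by
    ext <;> (show ((n + 1 : ℕ) : ℤ) * _ = ((n : ℕ) : ℤ) * _ + _; push_cast; ring)
  zsmul_neg' := fun n a => by
    ext <;> (show (Int.negSucc n) * _ = -(((n + 1 : ℕ) : ℤ) * _)
             simp only [Int.negSucc_eq, Nat.cast_add, Nat.cast_one]; ring)

@[simp] theorem intCast_re (n : ℤ) : (n : Eis).re = n := rfl
@[simp] theorem intCast_im (n : ℤ) : (n : Eis).im = 0 := rfl
@[simp] theorem natCast_re (n : ℕ) : (n : Eis).re = n := rfl
@[simp] theorem natCast_im (n : ℕ) : (n : Eis).im = 0 := rfl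
@[simp] theorem sub_re (a b : Eis) : (a - b).re = a.re - b.re := by
  simp [sub_eq_add_neg]
@[simp] theorem sub_im (a b : Eis) : (a - b).im = a.im - b.im := by
  simp [sub_eq_add_neg]

instance : Nontrivial Eis := ⟨⟨0, 1, by decide⟩⟩

/-- The norm `a² - ab + b²` of `a + bω`. -/
def norm (z : Eis) : ℤ := z.re ^ 2 - z.re * z.im + z.im ^ 2

theorem norm_def (z : Eis) : norm z = z.re ^ 2 - z.re * z.im + z.im ^ 2 := rfl

@[simp] theorem norm_mul (a b : Eis) : norm (a * b) = norm a * norm b := by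
  simp only [norm_def, mul_re, mul_im]; ring

@[simp] theorem norm_one : norm 1 = 1 := by simp [norm_def]
@[simp] theorem norm_zero : norm 0 = 0 := by simp [norm_def]
@[simp] theorem norm_intCast (n : ℤ) : norm (n : Eis) = n ^ 2 := by simp [norm_def]

theorem norm_nonneg (z : Eis) : 0 ≤ norm z := by
  have : 4 * norm z = (2 * z.re - z.im) ^ 2 + 3 * z.im ^ 2 := by rw [norm_def]; ring
  nlinarith [sq_nonneg (2 * z.re - z.im), sq_nonneg z.im]

theorem norm_eq_zero_iff {z : Eis} : norm z = 0 ↔ z = 0 := by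
  constructor
  · intro h
    have h4 : (2 * z.re - z.im) ^ 2 + 3 * z.im ^ 2 = 0 := by rw [norm_def] at h; nlinarith
    have h1 : z.im = 0 := by nlinarith [sq_nonneg (2 * z.re - z.im), sq_nonneg z.im]
    have h2 : z.re = 0 := by nlinarith [sq_nonneg z.im]
    ext <;> simp [h1, h2]
  · rintro rfl; simp

/-- Conjugation: `a + bω ↦ (a - b) - bω`. -/
def conj (z : Eis) : Eis := ⟨z.re - z.im, -z.im⟩

@[simp] theorem conj_re (z : Eis) : (conj z).re = z.re - z.im := rfl
@[simp] theorem conj_im (z : Eis) : (conj z).im = -z.im := rfl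

@[simp] theorem conj_mul (a b : Eis) : conj (a * b) = conj a * conj b := by
  ext <;> simp <;> ring

@[simp] theorem conj_conj (z : Eis) : conj (conj z) = z := by ext <;> simp
@[simp] theorem conj_intCast (n : ℤ) : conj (n : Eis) = n := by ext <;> simp
@[simp] theorem norm_conj (z : Eis) : norm (conj z) = norm z := by
  simp [norm_def]; ring

theorem mul_conj (z : Eis) : z * conj z = (norm z : Eis) := by
  ext <;> simp only [mul_re, mul_im, conj_re, conj_im, intCast_re, intCast_im, norm_def] <;> ring

theorem norm_dvd_norm {z w : Eis} (h : z ∣ w) : norm z ∣ norm w := by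
  obtain ⟨c, rfl⟩ := h; exact ⟨norm c, by simp⟩

theorem conj_dvd_conj {z w : Eis} (h : z ∣ w) : conj z ∣ conj w := by
  obtain ⟨c, rfl⟩ := h; exact ⟨conj c, by simp⟩

theorem isUnit_iff_norm_eq_one {z : Eis} : IsUnit z ↔ norm z = 1 := by
  constructor
  · rintro ⟨u, rfl⟩
    have h : norm (u : Eis) * norm ((u⁻¹ : Eisˣ) : Eis) = 1 := by
      rw [← norm_mul]; simp
    have := norm_nonneg (u : Eis)
    exact Int.eq_one_of_mul_eq_one_right this h
  · intro h
    exact isUnit_iff_exists_inv.mpr ⟨conj z, by rw [mul_conj, h]; rfl⟩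

/-- Euclidean division: round coordinates of `x * conj y / norm y`. -/
def ediv (x y : Eis) : Eis :=
  ⟨round (((x * conj y).re : ℚ) / (norm y : ℚ)),
   round (((x * conj y).im : ℚ) / (norm y : ℚ))⟩

def emod (x y : Eis) : Eis := x - y * ediv x y

theorem norm_emod_lt (x : Eis) {y : Eis} (hy : y ≠ 0) : norm (emod x y) < norm y := by
  have hd : 0 < norm y := lt_of_le_of_ne (norm_nonneg y) (fun h => hy (norm_eq_zero_iff.mp h.symm))
  set d : ℤ := norm y with hdd
  set q : Eis := ediv x y with hq
  set t : Eis := x * conj y with ht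
  -- key bounds on the remainders of the coordinates
  have key : ∀ (a : ℤ), 2 * |a - d * round ((a : ℚ) / (d : ℚ))| ≤ d := by
    intro a
    have hdq : (0 : ℚ) < (d : ℚ) := by exact_mod_cast hd
    have h1 : |(a : ℚ) / d - round ((a : ℚ) / d)| ≤ 1 / 2 := abs_sub_round _
    have h2 : |(a : ℚ) - d * round ((a : ℚ) / d)| ≤ d / 2 := by
      have : (a : ℚ) - d * round ((a : ℚ) / d) = d * ((a : ℚ) / d - round ((a : ℚ) / d)) := by
        field_simp
      rw [this, abs_mul, abs_of_pos hdq]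
      calc (d : ℚ) * |(a : ℚ) / d - round ((a : ℚ) / d)| ≤ (d : ℚ) * (1/2) :=
              mul_le_mul_of_nonneg_left h1 (le_of_lt hdq)
        _ = d / 2 := by ring
    have : (2 : ℚ) * |((a - d * round ((a : ℚ) / d) : ℤ) : ℚ)| ≤ (d : ℚ) := by
      push_cast
      rw [abs_sub_comm] at h2
      rw [abs_sub_comm]
      linarith
    exact_mod_cast this
  have hu := key t.re
  have hv := key t.im
  set u : ℤ := t.re - d * q.re with hu'
  set v : ℤ := t.im - d * q.im with hv'
  have hu2 : 2 * |u| ≤ d := hu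
  have hv2 : 2 * |v| ≤ d := hv
  -- norm (emod x y) * d = u² - uv + v²
  have hnorm : norm (emod x y) * d = u ^ 2 - u * v + v ^ 2 := by
    have h1 : emod x y * conj y = t - (d : Eis) * q := by
      rw [emod, ht]; ring_nf
      rw [hdd, ← mul_conj y]; ring
    have h2 : norm (emod x y) * d = norm (t - (d : Eis) * q) := by
      rw [← h1, norm_mul, norm_conj]
    rw [h2, norm_def]
    simp only [sub_re, sub_im, mul_re, mul_im, intCast_re, intCast_im]
    rw [hu', hv']
    ring
  have habs_u : u ^ 2 * 4 ≤ d ^ 2 := by nlinarith [abs_nonneg u, sq_abs u]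
  have habs_v : v ^ 2 * 4 ≤ d ^ 2 := by nlinarith [abs_nonneg v, sq_abs v]
  nlinarith [sq_nonneg (u + v), sq_nonneg (u - v)]

instance : EuclideanDomain Eis :=
  { Eis.commRing, (inferInstance : Nontrivial Eis) with
    quotient := ediv
    remainder := emod
    quotient_zero := fun a => by
      ext <;> simp [ediv]
    quotient_mul_add_remainder_eq := fun a b => by rw [emod]; ring
    r := fun a b => a.norm.natAbs < b.norm.natAbs
    r_wellFounded := (measure (Int.natAbs ∘ norm)).wf
    remainder_lt := fun a b hb => by
      have := norm_emod_lt a hb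
      have h1 := norm_nonneg (emod a b)
      have h2 := norm_nonneg b
      omega
    mul_left_not_lt := fun a b hb0 => by
      have h : norm a ≤ norm (a * b) := by
        rw [norm_mul]
        have hb : 1 ≤ norm b := by
          have := norm_nonneg b
          rcases (lt_or_eq_of_le this) with h | h
          · omega
          · exact absurd (norm_eq_zero_iff.mp h.symm) hb0
        nlinarith [norm_nonneg a]
      have h1 := norm_nonneg a
      have h2 := norm_nonneg (a * b)
      omega }

instance : IsDomain Eis := inferInstance

theorem norm_natCast' (p : ℕ) : norm (p : Eis) = (p : ℤ) ^ 2 := by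
  have h : ((p : ℤ) : Eis) = (p : Eis) := by push_cast; rfl
  rw [← h, norm_intCast]

theorem prime_conj {z : Eis} (hz : Prime z) : Prime (conj z) := by
  refine ⟨fun h => hz.1 ?_, fun h => hz.2.1 ?_, fun a b h => ?_⟩
  · have := congrArg conj h; simpa [show conj 0 = 0 from by ext <;> simp] using this
  · rw [isUnit_iff_norm_eq_one] at h ⊢; simpa using h
  · have h' : z ∣ conj a * conj b := by
      have := conj_dvd_conj h
      rwa [conj_conj, conj_mul] at this
    rcases hz.2.2 _ _ h' with h1 | h1
    · left; have := conj_dvd_conj h1; rwa [conj_conj] at this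
    · right; have := conj_dvd_conj h1; rwa [conj_conj] at this

theorem norm_eq_of_dvd_prime_pow {p : ℕ} (hp : p.Prime) {ρ : Eis}
    (hρp : ρ ∣ (p : Eis)) (hρ : Prime ρ) : norm ρ = p ∨ norm ρ = (p : ℤ) ^ 2 := by
  have h1 : norm ρ ∣ (p : ℤ) ^ 2 := by
    have := norm_dvd_norm hρp
    rwa [norm_natCast'] at this
  have h2 : (norm ρ).natAbs ∣ p ^ 2 := by
    have h := Int.natAbs_dvd_natAbs.mpr h1
    rwa [show ((p : ℤ) ^ 2).natAbs = p ^ 2 by rw [Int.natAbs_pow]; simp] at h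
  obtain ⟨i, hi, hteq⟩ := (Nat.dvd_prime_pow hp).mp h2
  have hnn : 0 ≤ norm ρ := norm_nonneg ρ
  have habs : norm ρ = ((norm ρ).natAbs : ℤ) := (Int.natAbs_of_nonneg hnn).symm
  have hne1 : norm ρ ≠ 1 := fun h => hρ.2.1 (isUnit_iff_norm_eq_one.mpr h)
  interval_cases i
  · exfalso; apply hne1; rw [habs, hteq]; simp
  · left; rw [habs, hteq]; simp
  · right; rw [habs, hteq]; push_cast; ring

theorem exists_prime_factor_over {p : ℕ} (hp : p.Prime) (w : Eis)
    (hpw : (p : ℤ) ∣ norm w) :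
    ∃ π : Eis, Prime π ∧ π ∣ w ∧ (norm π = p ∨ norm π = (p : ℤ) ^ 2) := by
  have hp2 : (2 : ℕ) ≤ p := hp.two_le
  have hpz : (p : Eis) ≠ 0 := by
    intro h
    have h2 := congrArg re h
    simp at h2
    omega
  have hpu : ¬IsUnit (p : Eis) := by
    rw [isUnit_iff_norm_eq_one, norm_natCast']
    nlinarith [hp2]
  obtain ⟨π, hirr, hdvd⟩ := WfDvdMonoid.exists_irreducible_factor hpu hpz
  have hprime : Prime π := hirr.prime
  have hww : π ∣ w * conj w := by
    obtain ⟨c, hc⟩ := hpw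
    have hcast : (norm w : Eis) = (p : Eis) * (c : Eis) := by
      rw [hc]; push_cast; ring
    rw [mul_conj, hcast]
    exact hdvd.mul_right _
  rcases hprime.2.2 _ _ hww with h1 | h1
  · exact ⟨π, hprime, h1, norm_eq_of_dvd_prime_pow hp hdvd hprime⟩
  · refine ⟨conj π, prime_conj hprime, ?_, ?_⟩
    · have := conj_dvd_conj h1; rwa [conj_conj] at this
    · apply norm_eq_of_dvd_prime_pow hp _ (prime_conj hprime)
      have := conj_dvd_conj hdvd
      rwa [show conj (p : Eis) = (p : Eis) by ext <;> simp] at this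

theorem exists_factor_of_norm_eq_mul :
    ∀ (N : ℕ) (m c : ℤ), m.natAbs = N → 0 ≤ m →
      ∀ w : Eis, IsCoprime m c → norm w = m * c → ∃ z : Eis, z ∣ w ∧ norm z = m := by
  intro N
  induction N using Nat.strong_induction_on with
  | _ N ih =>
    intro m c hN hm w hco hnorm
    rcases eq_or_lt_of_le hm with h0 | hpos
    · -- m = 0
      refine ⟨0, ?_, by simp [← h0]⟩
      have : norm w = 0 := by rw [hnorm, ← h0]; ring
      rw [norm_eq_zero_iff.mp this]
    rcases eq_or_lt_of_le (show (1 : ℤ) ≤ m by omega) with h1 | h2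
    · exact ⟨1, one_dvd _, by simp [← h1]⟩
    -- 2 ≤ m
    have hne1 : m.natAbs ≠ 1 := by omega
    obtain ⟨p, hp, hpm'⟩ := Nat.exists_prime_and_dvd hne1
    have hpm : (p : ℤ) ∣ m := by
      have h : ((p : ℕ) : ℤ) ∣ (m.natAbs : ℤ) := Int.natCast_dvd_natCast.mpr hpm'
      rwa [Int.dvd_natAbs] at h
    have hpw : (p : ℤ) ∣ norm w := hnorm ▸ hpm.mul_right c
    obtain ⟨π, hπ, hπw, hπn⟩ := exists_prime_factor_over hp w hpw
    -- norm π divides m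
    have hDm : norm π ∣ m := by
      rcases hπn with h | h
      · rwa [h]
      · rw [h]
        have hpc : IsCoprime ((p : ℤ) ^ 2) c :=
          ((hco.of_isCoprime_of_dvd_left hpm).pow_left)
        have hp2w : (p : ℤ) ^ 2 ∣ m * c := by
          rw [← hnorm, ← h]; exact norm_dvd_norm hπw
        exact hpc.dvd_of_dvd_mul_right hp2w
    have hD2 : 2 ≤ norm π := by
      rcases hπn with h | h
      · rw [h]; exact_mod_cast hp.two_le
      · rw [h]; nlinarith [hp.two_le]
    obtain ⟨m₁, hm₁⟩ := hDm
    obtain ⟨w₁, hw₁⟩ := hπw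
    have hDpos : 0 < norm π := by omega
    have hm₁nn : 0 ≤ m₁ := by nlinarith
    have hnorm₁ : norm w₁ = m₁ * c := by
      have h : norm π * norm w₁ = norm π * (m₁ * c) := by
        rw [← norm_mul, ← hw₁, hnorm, hm₁]; ring
      exact mul_left_cancel₀ (by omega) h
    have hco₁ : IsCoprime m₁ c := hco.of_isCoprime_of_dvd_left ⟨norm π, by rw [hm₁]; ring⟩
    have hlt : m₁.natAbs < N := by
      have : m₁ < m := by nlinarith
      omega
    obtain ⟨z₁, hz₁w, hz₁n⟩ := ih m₁.natAbs hlt m₁ c rfl hm₁nn w₁ hco₁ hnorm₁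
    exact ⟨π * z₁, hw₁ ▸ mul_dvd_mul_left π hz₁w, by rw [norm_mul, hz₁n, hm₁]⟩

theorem unit_cases {u : Eis} (h : norm u = 1) :
    u = ⟨1,0⟩ ∨ u = ⟨-1,0⟩ ∨ u = ⟨0,1⟩ ∨ u = ⟨0,-1⟩ ∨ u = ⟨1,1⟩ ∨ u = ⟨-1,-1⟩ := by
  obtain ⟨a, b⟩ := u
  rw [norm_def] at h
  simp only at h
  have h4 : (2*a - b)^2 + 3*b^2 = 4 := by linear_combination 4 * h
  have hb2 : b^2 ≤ 1 := by nlinarith [sq_nonneg (2*a - b)]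
  have hb1 : b ≤ 1 := by nlinarith [sq_nonneg (b - 1)]
  have hb0 : -1 ≤ b := by nlinarith [sq_nonneg (b + 1)]
  have ha2 : (2*a - b)^2 ≤ 4 := by nlinarith [sq_nonneg b]
  have hx1 : 2*a - b ≤ 2 := by nlinarith [sq_nonneg (2*a - b - 2)]
  have hx2 : -2 ≤ 2*a - b := by nlinarith [sq_nonneg (2*a - b + 2)]
  have ha1 : a ≤ 1 := by omega
  have ha0 : -1 ≤ a := by omega
  interval_cases a <;> interval_cases b <;> first | (exfalso; omega) | decide

theorem isCoprime_of_norm_isCoprime {z w : Eis} (h : IsCoprime (norm z) (norm w)) :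
    IsCoprime z w := by
  rw [← EuclideanDomain.gcd_isUnit_iff]
  have h1 : norm (EuclideanDomain.gcd z w) ∣ norm z :=
    norm_dvd_norm (EuclideanDomain.gcd_dvd_left z w)
  have h2 : norm (EuclideanDomain.gcd z w) ∣ norm w :=
    norm_dvd_norm (EuclideanDomain.gcd_dvd_right z w)
  have hu := h.isUnit_of_dvd' h1 h2
  rw [Int.isUnit_iff] at hu
  have := norm_nonneg (EuclideanDomain.gcd z w)
  rcases hu with h | h
  · exact isUnit_iff_norm_eq_one.mpr h
  · omega

end Eis

/-- The embedding of pairs into Eisenstein integers: `(x,y) ↦ (3y+1) - 3x·ω`. -/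
def toEis (p : ℤ × ℤ) : Eis := ⟨3 * p.2 + 1, -(3 * p.1)⟩

theorem toEis_injective : Function.Injective toEis := by
  rintro ⟨x, y⟩ ⟨x', y'⟩ h
  rw [Eis.ext_iff] at h
  simp only [toEis] at h
  obtain ⟨h1, h2⟩ := h
  ext <;> dsimp <;> omega

theorem norm_toEis (p : ℤ × ℤ) :
    Eis.norm (toEis p) =
      3 * (3 * p.1 ^ 2 + 3 * p.1 * p.2 + 3 * p.2 ^ 2 + p.1 + 2 * p.2) + 1 := by
  rw [Eis.norm_def]
  simp only [toEis]
  ring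

theorem exists_toEis {z : Eis} (h1 : z.re % 3 = 1) (h2 : z.im % 3 = 0) :
    ∃ p : ℤ × ℤ, toEis p = z := by
  refine ⟨(-(z.im) / 3, (z.re - 1) / 3), ?_⟩
  rw [Eis.ext_iff]
  simp only [toEis]
  constructor <;> omega

theorem exists_unit_mul_toEis (z : Eis) (hz : ¬ (3 : ℤ) ∣ Eis.norm z) :
    ∃ (u : Eis) (p : ℤ × ℤ), Eis.norm u = 1 ∧ z * u = toEis p := by
  have hre : z.re % 3 = 0 ∨ z.re % 3 = 1 ∨ z.re % 3 = 2 := by omega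
  have him : z.im % 3 = 0 ∨ z.im % 3 = 1 ∨ z.im % 3 = 2 := by omega
  have hnd : Eis.norm z = z.re^2 - z.re * z.im + z.im^2 := Eis.norm_def z
  set a := z.re
  set b := z.im
  have ha3 : a = 3 * (a / 3) + a % 3 := by omega
  have hb3 : b = 3 * (b / 3) + b % 3 := by omega
  set s := a / 3
  set t := b / 3
  -- helper to finish good cases
  have finish : ∀ u : Eis, Eis.norm u = 1 → (z * u).re % 3 = 1 → (z * u).im % 3 = 0 →
      ∃ (u : Eis) (p : ℤ × ℤ), Eis.norm u = 1 ∧ z * u = toEis p := by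
    intro u hu h1 h2
    obtain ⟨p, hp⟩ := exists_toEis h1 h2
    exact ⟨u, p, hu, hp.symm⟩
  rcases hre with h1 | h1 | h1 <;> rcases him with h2 | h2 | h2
  · -- (0,0): 3 divides norm
    exfalso
    apply hz
    refine ⟨3*s^2 - 3*s*t + 3*t^2, ?_⟩
    rw [hnd]
    have ha : a = 3*s := by omega
    have hb : b = 3*t := by omega
    rw [ha, hb]; ring
  · -- (0,1): u = ⟨-1,-1⟩
    apply finish ⟨-1,-1⟩ (by rw [Eis.norm_def]; norm_num) <;>
      simp only [Eis.mul_re, Eis.mul_im, Eis.mk_re, Eis.mk_im] <;> omega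
  · -- (0,2): u = ⟨1,1⟩
    apply finish ⟨1,1⟩ (by rw [Eis.norm_def]; norm_num) <;>
      simp only [Eis.mul_re, Eis.mul_im, Eis.mk_re, Eis.mk_im] <;> omega
  · -- (1,0): u = 1
    apply finish ⟨1,0⟩ (by rw [Eis.norm_def]; norm_num) <;>
      simp only [Eis.mul_re, Eis.mul_im, Eis.mk_re, Eis.mk_im] <;> omega
  · -- (1,1): u = ⟨0,-1⟩
    apply finish ⟨0,-1⟩ (by rw [Eis.norm_def]; norm_num) <;>
      simp only [Eis.mul_re, Eis.mul_im, Eis.mk_re, Eis.mk_im] <;> omega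
  · -- (1,2): 3 divides norm
    exfalso
    apply hz
    refine ⟨3*s^2 - 3*s*t + 3*t^2 + 3*t + 1, ?_⟩
    rw [hnd]
    have ha : a = 3*s + 1 := by omega
    have hb : b = 3*t + 2 := by omega
    rw [ha, hb]; ring
  · -- (2,0): u = ⟨-1,0⟩
    apply finish ⟨-1,0⟩ (by rw [Eis.norm_def]; norm_num) <;>
      simp only [Eis.mul_re, Eis.mul_im, Eis.mk_re, Eis.mk_im] <;> omega
  · -- (2,1): 3 divides norm
    exfalso
    apply hz
    refine ⟨3*s^2 - 3*s*t + 3*t^2 + 3*s + 1, ?_⟩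
    rw [hnd]
    have ha : a = 3*s + 2 := by omega
    have hb : b = 3*t + 1 := by omega
    rw [ha, hb]; ring
  · -- (2,2): u = ⟨0,1⟩
    apply finish ⟨0,1⟩ (by rw [Eis.norm_def]; norm_num) <;>
      simp only [Eis.mul_re, Eis.mul_im, Eis.mk_re, Eis.mk_im] <;> omega

theorem toEis_mul_unit {s r : ℤ × ℤ} {u : Eis} (hu : Eis.norm u = 1)
    (h : toEis s * u = toEis r) : s = r := by
  have h1 := congrArg Eis.re h
  have h2 := congrArg Eis.im h
  rcases Eis.unit_cases hu with rfl | rfl | rfl | rfl | rfl | rfl <;>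
    simp only [Eis.mul_re, Eis.mul_im, Eis.mk_re, Eis.mk_im, toEis] at h1 h2 <;>
    rw [Prod.ext_iff] <;> exact ⟨by omega, by omega⟩


theorem toEis_alphaMap (p q : ℤ × ℤ) : toEis (alphaMap (p, q)) = toEis p * toEis q := by
  rw [Eis.ext_iff]
  simp only [toEis, alphaMap, Eis.mul_re, Eis.mul_im]
  constructor <;> ring

theorem mem_C_iff (a : ℤ) (p : ℤ × ℤ) : p ∈ C a ↔ Eis.norm (toEis p) = 3 * a + 1 := by
  rw [norm_toEis]
  simp only [C, Set.mem_setOf_eq]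
  omega

theorem toEis_ne_zero_of_norm {p : ℤ × ℤ} {m : ℤ} (h : Eis.norm (toEis p) = m)
    (hm : m ≠ 0) : toEis p ≠ 0 := by
  intro h0
  rw [h0] at h
  simp at h
  exact hm h.symm

theorem stmt16 (n k : ℕ) (hn : 1 ≤ n) :
    Set.BijOn alphaMap (C (n : ℤ) ×ˢ C ((n + 3 ^ k : ℕ) : ℤ))
      (C ((3 * n ^ 2 + (3 ^ (k + 1) + 2) * n + 3 ^ k : ℕ) : ℤ)) := by
  have hcast1 : ((n + 3 ^ k : ℕ) : ℤ) = (n : ℤ) + 3 ^ k := by push_cast; ring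
  have hcast2 : ((3 * n ^ 2 + (3 ^ (k + 1) + 2) * n + 3 ^ k : ℕ) : ℤ) =
      3 * (n : ℤ) * ((n : ℤ) + 3 ^ k) + (n : ℤ) + ((n : ℤ) + 3 ^ k) := by push_cast; ring
  rw [hcast1, hcast2]
  set a : ℤ := (n : ℤ) with ha
  set b : ℤ := (n : ℤ) + 3 ^ k with hb
  have han : 0 ≤ a := Int.natCast_nonneg n
  have hbn : 0 ≤ b := by positivity
  have hma : (3 * a + 1) ≠ 0 := by omega
  have hco : IsCoprime (3 * a + 1) (3 * b + 1) := by
    have h3 : IsCoprime (3 * a + 1) (3 : ℤ) := ⟨1, -a, by ring⟩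
    have h3k : IsCoprime (3 * a + 1) ((3 : ℤ) ^ (k + 1)) := h3.pow_right
    have heq : (3 : ℤ) ^ (k + 1) + (3 * a + 1) * 1 = 3 * b + 1 := by rw [hb]; ring
    have := h3k.add_mul_left_right 1
    rwa [heq] at this
  refine ⟨?_, ?_, ?_⟩
  · -- MapsTo
    rintro ⟨p, q⟩ ⟨hp, hq⟩
    rw [mem_C_iff] at hp hq ⊢
    rw [toEis_alphaMap, Eis.norm_mul, hp, hq]
    ring
  · -- InjOn
    rintro ⟨p, p'⟩ ⟨hp, hp'⟩ ⟨q, q'⟩ ⟨hq, hq'⟩ heq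
    rw [mem_C_iff] at hp hp' hq hq'
    dsimp only at hp hp' hq hq'
    have h : toEis p * toEis p' = toEis q * toEis q' := by
      rw [← toEis_alphaMap, ← toEis_alphaMap, heq]
    have hdvd1 : toEis p ∣ toEis q * toEis q' := h ▸ dvd_mul_right _ _
    have hcop1 : IsCoprime (toEis p) (toEis q') :=
      Eis.isCoprime_of_norm_isCoprime (by rw [hp, hq']; exact hco)
    have hd1 : toEis p ∣ toEis q := hcop1.dvd_of_dvd_mul_right hdvd1
    obtain ⟨u, hu⟩ := hd1
    have hnu : Eis.norm u = 1 := by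
      have h2 : (3 * a + 1) * Eis.norm u = (3 * a + 1) * 1 := by
        conv_lhs => rw [← hp, ← Eis.norm_mul, ← hu]
        rw [hq, mul_one]
      have := mul_left_cancel₀ hma h2
      omega
    have hpq : p = q := toEis_mul_unit hnu hu.symm
    subst hpq
    have hne : toEis p ≠ 0 := toEis_ne_zero_of_norm hp hma
    have hp'q' : toEis p' = toEis q' := mul_left_cancel₀ hne h
    have : p' = q' := toEis_injective hp'q'
    subst this
    rfl
  · -- SurjOn
    rintro ⟨X, Y⟩ hXY
    rw [mem_C_iff] at hXY
    obtain ⟨z, hzdvd, hznorm⟩ :=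
      Eis.exists_factor_of_norm_eq_mul (3 * a + 1).natAbs (3 * a + 1) (3 * b + 1) rfl
        (by omega) (toEis (X, Y)) hco (by rw [hXY]; ring)
    obtain ⟨z', hw⟩ := hzdvd
    have hz'norm : Eis.norm z' = 3 * b + 1 := by
      have h2 : (3 * a + 1) * Eis.norm z' = (3 * a + 1) * (3 * b + 1) := by
        conv_lhs => rw [← hznorm, ← Eis.norm_mul, ← hw]
        rw [hXY]; ring
      exact mul_left_cancel₀ hma h2
    obtain ⟨u, p, hu, hzu⟩ := exists_unit_mul_toEis z (by rw [hznorm]; omega)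
    obtain ⟨v, q, hv, hzv⟩ := exists_unit_mul_toEis z' (by rw [hz'norm]; omega)
    have hkey : toEis (X, Y) * (u * v) = toEis (alphaMap (p, q)) := by
      rw [toEis_alphaMap, ← hzu, ← hzv, hw]; ring
    have hnuv : Eis.norm (u * v) = 1 := by rw [Eis.norm_mul, hu, hv]; ring
    have hXYeq : (X, Y) = alphaMap (p, q) := toEis_mul_unit hnuv hkey
    refine ⟨(p, q), ⟨?_, ?_⟩, hXYeq.symm⟩
    · rw [mem_C_iff, ← hzu, Eis.norm_mul, hznorm, hu]; ring
    · rw [mem_C_iff, ← hzv, Eis.norm_mul, hz'norm, hv]; ring
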